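/- Suppose κ̄_d = κ̄_t = 0 and κ̄_m > 0 (isotropic target curvature on the cone axis). Then the reduced energy along equilibria, Û(θ) = U(κ_m*(θ), θ) with κ_m*(θ) = κ̄_m/(a² cos²θ + b² sin²θ + 1), satisfies Û'(θ) = κ̄_m²(b²−a²) sin 2θ / (2(a² cos²θ + b² sin²θ + 1)²). In particular, if a ≠ b the stationary points of Û in [0, 2π) are exactly θ ∈ {0, π/2, π, 3π/2}. -/

import Mathlib

open Real

lemma D_pos (a b θ : ℝ) : 0 < a ^ 2 * Real.cos θ ^ 2 + b ^ 2 * Real.sin θ ^ 2 + 1 := by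
  have h1 : 0 ≤ a ^ 2 * Real.cos θ ^ 2 := by positivity
  have h2 : 0 ≤ b ^ 2 * Real.sin θ ^ 2 := by positivity
  linarith

lemma D_hasDeriv (a b θ : ℝ) :
    HasDerivAt (fun t => a ^ 2 * Real.cos t ^ 2 + b ^ 2 * Real.sin t ^ 2 + 1)
      ((b ^ 2 - a ^ 2) * Real.sin (2 * θ)) θ := by
  have hc : HasDerivAt (fun t => a ^ 2 * Real.cos t ^ 2)
      (a ^ 2 * (2 * Real.cos θ * (-Real.sin θ))) θ := by
    exact (((Real.hasDerivAt_cos θ).pow 2).const_mul (a ^ 2)).congr_deriv (by ring)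
  have hs : HasDerivAt (fun t => b ^ 2 * Real.sin t ^ 2)
      (b ^ 2 * (2 * Real.sin θ * Real.cos θ)) θ := by
    exact (((Real.hasDerivAt_sin θ).pow 2).const_mul (b ^ 2)).congr_deriv (by ring)
  have := (hc.add hs).add_const 1
  refine this.congr_deriv ?_
  rw [Real.sin_two_mul]; ring

/-- Derivative of the reduced energy along equilibria and its stationary
points for the isotropic target curvature. -/
theorem reduced_energy_derivative_and_stationary_points
    (a b kbarm : ℝ) (ha : 0 < a) (hb : 0 < b) (hk : 0 < kbarm) :
    let U : ℝ → ℝ → ℝ := fun x t =>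
      (x - kbarm) ^ 2 / 2 + (x * a * Real.cos t) ^ 2 / 2 + (x * b * Real.sin t) ^ 2 / 2
    let κmStar : ℝ → ℝ := fun t =>
      kbarm / (a ^ 2 * Real.cos t ^ 2 + b ^ 2 * Real.sin t ^ 2 + 1)
    let Uhat : ℝ → ℝ := fun t => U (κmStar t) t
    (∀ θ : ℝ, deriv Uhat θ =
        kbarm ^ 2 * (b ^ 2 - a ^ 2) * Real.sin (2 * θ) /
          (2 * (a ^ 2 * Real.cos θ ^ 2 + b ^ 2 * Real.sin θ ^ 2 + 1) ^ 2)) ∧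
      (a ≠ b →
        {θ ∈ Set.Ico (0 : ℝ) (2 * Real.pi) | deriv Uhat θ = 0} =
          {0, Real.pi / 2, Real.pi, 3 * Real.pi / 2}) := by
  intro U κmStar Uhat
  set D : ℝ → ℝ := fun t => a ^ 2 * Real.cos t ^ 2 + b ^ 2 * Real.sin t ^ 2 + 1 with hD
  have hDpos : ∀ t, 0 < D t := fun t => D_pos a b t
  -- Uhat simplification
  have hUhat : Uhat = fun t => kbarm ^ 2 / 2 - kbarm ^ 2 / 2 * (D t)⁻¹ := by
    funext t
    have hne : D t ≠ 0 := (hDpos t).ne'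
    show (kbarm / D t - kbarm) ^ 2 / 2 + (kbarm / D t * a * Real.cos t) ^ 2 / 2 +
        (kbarm / D t * b * Real.sin t) ^ 2 / 2 = kbarm ^ 2 / 2 - kbarm ^ 2 / 2 * (D t)⁻¹
    field_simp
    ring
  have hderiv : ∀ θ : ℝ, deriv Uhat θ =
      kbarm ^ 2 * (b ^ 2 - a ^ 2) * Real.sin (2 * θ) / (2 * (D θ) ^ 2) := by
    intro θ
    have hne : D θ ≠ 0 := (hDpos θ).ne'
    have hDd := D_hasDeriv a b θ
    have hinv : HasDerivAt (fun t => (D t)⁻¹)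
        (-((b ^ 2 - a ^ 2) * Real.sin (2 * θ)) / (D θ) ^ 2) θ := hDd.inv hne
    have h2 : HasDerivAt Uhat
        (kbarm ^ 2 * (b ^ 2 - a ^ 2) * Real.sin (2 * θ) / (2 * (D θ) ^ 2)) θ := by
      rw [hUhat]
      have := ((hinv.const_mul (kbarm ^ 2 / 2)).const_sub (kbarm ^ 2 / 2))
      refine this.congr_deriv ?_
      ring
    exact h2.deriv
  refine ⟨hderiv, fun hab => ?_⟩
  ext θ
  simp only [Set.mem_setOf_eq, Set.mem_Ico, Set.mem_insert_iff, Set.mem_singleton_iff]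
  rw [hderiv θ]
  have hne : (2 * (D θ) ^ 2) ≠ 0 := by positivity
  have hk2 : kbarm ^ 2 ≠ 0 := by positivity
  have hba : b ^ 2 - a ^ 2 ≠ 0 := by
    intro h
    apply hab
    nlinarith
  have key : kbarm ^ 2 * (b ^ 2 - a ^ 2) * Real.sin (2 * θ) / (2 * (D θ) ^ 2) = 0 ↔
      Real.sin (2 * θ) = 0 := by
    rw [div_eq_zero_iff]
    constructor
    · rintro (h | h)
      · rcases mul_eq_zero.1 h with h' | h'
        · exact absurd h' (mul_ne_zero hk2 hba)
        · exact h'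
      · exact absurd h hne
    · intro h; left; rw [h]; ring
  rw [key]
  have hpi := Real.pi_pos
  constructor
  · rintro ⟨⟨h0, h2p⟩, hs⟩
    rw [Real.sin_eq_zero_iff] at hs
    obtain ⟨n, hn⟩ := hs
    -- 2θ = nπ, θ ∈ [0, 2π) ⇒ n ∈ {0,1,2,3}
    have hθ : θ = n * Real.pi / 2 := by linarith
    have hn0 : 0 ≤ n := by
      by_contra h
      push_neg at h
      have h' : n ≤ -1 := by omega
      have : (n : ℝ) ≤ -1 := by exact_mod_cast h'
      nlinarith
    have hn4 : n < 4 := by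
      by_contra h
      push_neg at h
      have : (4 : ℝ) ≤ (n : ℝ) := by exact_mod_cast h
      nlinarith
    interval_cases n <;> push_cast at hθ
    · left; linarith
    · right; left; linarith
    · right; right; left; linarith
    · right; right; right; linarith
  · rintro (h | h | h | h) <;> subst h <;>
      refine ⟨⟨by positivity, by linarith⟩, ?_⟩
    · simp
    · rw [show 2 * (Real.pi / 2) = Real.pi by ring]; exact Real.sin_pi
    · rw [show 2 * Real.pi = 2 * Real.pi by ring]
      exact Real.sin_two_pi
    · rw [show 2 * (3 * Real.pi / 2) = Real.pi + 2 * Real.pi by ring]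
      rw [Real.sin_add]; simp
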